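/- The class of string languages recognized by well-ordered ordered context-free grammars equals the class of context-free languages; likewise the class of string languages recognized by ordered context-free grammars having least parse trees equals the class of context-free languages. -/

import Mathlib

namespace Ocfg

/-- A symbol: nonterminal or terminal. -/
inductive Sym (N T : Type) : Type
  | nt : N → Sym N T
  | tm : T → Sym N T

/-- An (ordered) context-free grammar: each nonterminal has an ordered
list of right-hand sides; `start` is the start nonterminal. -/
structure OCFG (N T : Type) : Type where
  prods : N → List (List (Sym N T))
  start : N

/-- Ordered ranked trees used as parse trees: terminal leaves, ε-leaves,
and internal nodes labelled by a nonterminal together with the index of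
the rule applied there. -/
inductive PTree (N T : Type) : Type
  | leaf : T → PTree N T
  | eps  : PTree N T
  | node : N → ℕ → List (PTree N T) → PTree N T

mutual
/-- `ParseFrom G A w t`: `t` is a parse tree with root nonterminal `A`
and yield `w`. -/
inductive ParseFrom {N T : Type} (G : OCFG N T) : N → List T → PTree N T → Prop
  | epsNode (A : N) (i : ℕ) :
      (G.prods A)[i]? = some [] →
      ParseFrom G A [] (PTree.node A i [PTree.eps])
  | node (A : N) (i : ℕ) (r : List (Sym N T)) (w : List T) (cs : List (PTree N T)) :
      (G.prods A)[i]? = some r → r ≠ [] → ParseSeq G r w cs →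
      ParseFrom G A w (PTree.node A i cs)

/-- `ParseSeq G r w cs`: the trees `cs` match, in order, the symbols of `r`,
with concatenated yield `w`. -/
inductive ParseSeq {N T : Type} (G : OCFG N T) : List (Sym N T) → List T → List (PTree N T) → Prop
  | nil : ParseSeq G [] [] []
  | consTm (a : T) (r : List (Sym N T)) (w : List T) (cs : List (PTree N T)) :
      ParseSeq G r w cs →
      ParseSeq G (Sym.tm a :: r) (a :: w) (PTree.leaf a :: cs)
  | consNt (A : N) (t : PTree N T) (wA : List T) (r : List (Sym N T)) (w : List T)
      (cs : List (PTree N T)) :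
      ParseFrom G A wA t → ParseSeq G r w cs →
      ParseSeq G (Sym.nt A :: r) (wA ++ w) (t :: cs)
end

/-- The set `P_G(w)` of parse trees of `w`. -/
def parseTrees {N T : Type} (G : OCFG N T) (w : List T) : Set (PTree N T) :=
  {t | ParseFrom G G.start w t}

/-- `n(t)`: the sequence of rule indices of `t`, in pre-order. -/
def PTree.idxSeq {N T : Type} : PTree N T → List ℕ
  | .leaf _ => []
  | .eps => []
  | .node _ i cs => i :: (cs.attach.map (fun c => PTree.idxSeq c.1)).flatten
decreasing_by
  have := List.sizeOf_lt_of_mem c.2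
  simp_wf
  omega

/-- The order `≺_G` on parse trees: lexicographic comparison of the
pre-order rule-index sequences. -/
def treeLT {N T : Type} (t₁ t₂ : PTree N T) : Prop :=
  List.Lex (· < ·) t₁.idxSeq t₂.idxSeq

/-- One-step derivation relation `⇒` of the underlying CFG. -/
def OCFG.Step {N T : Type} (G : OCFG N T) (u v : List (Sym N T)) : Prop :=
  ∃ (u₁ u₂ : List (Sym N T)) (A : N) (r : List (Sym N T)),
    r ∈ G.prods A ∧ u = u₁ ++ Sym.nt A :: u₂ ∧ v = u₁ ++ r ++ u₂

/-- `⇒*`. -/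
def OCFG.Derives {N T : Type} (G : OCFG N T) : List (Sym N T) → List (Sym N T) → Prop :=
  Relation.ReflTransGen G.Step

/-- A nonterminal is useful if it occurs in some sentential form derivable from
the start symbol and derives some terminal string. -/
def Useful {N T : Type} (G : OCFG N T) (A : N) : Prop :=
  (∃ u₁ u₂ : List (Sym N T), G.Derives [Sym.nt G.start] (u₁ ++ Sym.nt A :: u₂)) ∧
  (∃ w : List T, G.Derives [Sym.nt A] (w.map Sym.tm))

/-- `G` is cyclic if `A ⇒⁺ A` for some nonterminal `A`. -/
def Cyclic {N T : Type} (G : OCFG N T) : Prop :=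
  ∃ A : N, Relation.TransGen G.Step [Sym.nt A] [Sym.nt A]

/-- `G` has no ε-rules. -/
def NoEpsRules {N T : Type} (G : OCFG N T) : Prop :=
  ∀ (A : N) (r : List (Sym N T)), r ∈ G.prods A → r ≠ []

/-- A unit-rule step: `A → B` is a rule of `G`. -/
def UnitStep {N T : Type} (G : OCFG N T) (A B : N) : Prop :=
  [Sym.nt B] ∈ G.prods A

/-- `G` has a cycle of unit rules. -/
def HasUnitCycle {N T : Type} (G : OCFG N T) : Prop :=
  ∃ A : N, Relation.TransGen (UnitStep G) A A

/-- `G` is well-ordered: for every string `w`, every nonempty subset of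
`P_G(w)` has a `≺_G`-least element. -/
def WellOrderedG {N T : Type} (G : OCFG N T) : Prop :=
  ∀ (w : List T) (Φ : Set (PTree N T)), Φ ⊆ parseTrees G w → Φ.Nonempty →
    ∃ t ∈ Φ, ∀ t' ∈ Φ, t = t' ∨ treeLT t t'

/-- `t` is the `≺_G`-least parse tree of `w`. -/
def IsLeastTree {N T : Type} (G : OCFG N T) (w : List T) (t : PTree N T) : Prop :=
  ParseFrom G G.start w t ∧ ∀ t', ParseFrom G G.start w t' → t = t' ∨ treeLT t t'

/-- `G` has least parse trees. -/
def HasLeastTrees {N T : Type} (G : OCFG N T) : Prop :=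
  ∀ w : List T, (parseTrees G w).Nonempty → ∃ t, IsLeastTree G w t

/-- Derivations of a given length (number of steps). -/
inductive DerivesIn {N T : Type} (G : OCFG N T) : List (Sym N T) → List (Sym N T) → ℕ → Prop
  | refl (u : List (Sym N T)) : DerivesIn G u u 0
  | step (u v w : List (Sym N T)) (n : ℕ) :
      G.Step u v → DerivesIn G v w n → DerivesIn G u w (n + 1)

/-- Number of rule applications in a parse tree (= length of the
corresponding leftmost derivation). -/
def PTree.numRules {N T : Type} : PTree N T → ℕ
  | .leaf _ => 0
  | .eps => 0
  | .node _ _ cs => 1 + ((cs.attach.map (fun c => PTree.numRules c.1)).foldr (· + ·) 0)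
decreasing_by
  have := List.sizeOf_lt_of_mem c.2
  simp_wf
  omega

/-- Height of a tree: a single leaf has height 0. -/
def PTree.height {N T : Type} : PTree N T → ℕ
  | .leaf _ => 0
  | .eps => 0
  | .node _ _ cs => 1 + ((cs.attach.map (fun c => PTree.height c.1)).foldr max 0)
decreasing_by
  have := List.sizeOf_lt_of_mem c.2
  simp_wf
  omega

/-- The language of `G`. -/
def langOf {N T : Type} (G : OCFG N T) : Language T :=
  {w | ∃ t, ParseFrom G G.start w t}

end Ocfg

open Ocfg

namespace Ocfg

attribute [local instance] Classical.propDecidable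

variable {N T : Type}

/-- basic inversions -/
lemma ParseSeq.nil_inv {G : OCFG N T} {w cs} (h : ParseSeq G [] w cs) : w = [] ∧ cs = [] := by
  cases h; exact ⟨rfl, rfl⟩

def sym2symbol : Sym N T → Symbol T N
  | .nt A => .nonterminal A
  | .tm a => .terminal a

def symbol2sym : Symbol T N → Sym N T
  | .nonterminal A => .nt A
  | .terminal a => .tm a

@[simp] lemma symbol2sym_sym2symbol (s : Sym N T) : symbol2sym (sym2symbol s) = s := by
  cases s <;> rfl

@[simp] lemma sym2symbol_symbol2sym (s : Symbol T N) : sym2symbol (symbol2sym s) = s := by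
  cases s <;> rfl

/-- the Mathlib grammar associated to an oCFG -/
@[reducible] noncomputable def mg [Fintype N] (G : OCFG N T) : ContextFreeGrammar T :=
  letI := Classical.decEq (ContextFreeRule T N)
  ⟨N, G.start, (Finset.univ : Finset N).biUnion fun A =>
    ((G.prods A).map fun r => ⟨A, r.map sym2symbol⟩).toFinset⟩

lemma mem_mg_rules [Fintype N] (G : OCFG N T) (r' : ContextFreeRule T N) :
    r' ∈ (mg G).rules ↔ ∃ A, ∃ r ∈ G.prods A, r' = ⟨A, r.map sym2symbol⟩ := by
  classical
  simp only [mg, Finset.mem_biUnion, Finset.mem_univ, true_and, List.mem_toFinset,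
    List.mem_map]
  constructor
  · rintro ⟨A, hA⟩
    obtain ⟨r, hr, rfl⟩ := hA
    exact ⟨A, r, hr, rfl⟩
  · rintro ⟨A, r, hr, rfl⟩
    exact ⟨A, r, hr, rfl⟩

lemma rule_mem_of_getElem? {G : OCFG N T} {A : N} {i : ℕ} {r : List (Sym N T)}
    (h : (G.prods A)[i]? = some r) : r ∈ G.prods A := by
  exact List.mem_of_getElem? h

lemma exists_index_of_mem {G : OCFG N T} {A : N} {r : List (Sym N T)}
    (h : r ∈ G.prods A) : ∃ i : ℕ, (G.prods A)[i]? = some r :=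
  List.mem_iff_getElem?.mp h

/-- Parse ⇒ Derives -/
lemma parse_derives_aux [Fintype N] (G : OCFG N T) : ∀ n : ℕ,
    (∀ (t : PTree N T) A w, sizeOf t < n → ParseFrom G A w t →
      (mg G).Derives [Symbol.nonterminal A] (w.map Symbol.terminal)) ∧
    (∀ (cs : List (PTree N T)) r w, sizeOf cs < n → ParseSeq G r w cs →
      (mg G).Derives (r.map sym2symbol) (w.map Symbol.terminal)) := by
  intro n
  induction n using Nat.strong_induction_on with
  | _ n ih =>
  constructor
  · rintro t A w hn hp
    cases hp with
    | epsNode A i hi =>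
      refine ContextFreeGrammar.Produces.single ⟨⟨A, []⟩, ?_, ?_⟩
      · exact (mem_mg_rules G _).2 ⟨A, [], rule_mem_of_getElem? hi, rfl⟩
      · exact ContextFreeRule.Rewrites.input_output
    | node A i r w cs hi hne hs =>
      have h1 : (mg G).Produces [Symbol.nonterminal A] (r.map sym2symbol) := by
        refine ⟨⟨A, r.map sym2symbol⟩, ?_, ?_⟩
        · exact (mem_mg_rules G _).2 ⟨A, r, rule_mem_of_getElem? hi, rfl⟩
        · exact ContextFreeRule.Rewrites.input_output
      have hcs : sizeOf cs < sizeOf (PTree.node A i cs) := by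
        first
        | (simp; omega)
        | simp
        | omega
      have h2 := (ih (sizeOf (PTree.node A i cs)) hn).2 cs r w hcs hs
      exact h1.trans_derives h2
  · rintro cs r w hn hs
    cases hs with
    | nil => simp only [List.map_nil]; rfl
    | consTm a r w cs hs =>
      have hsz : sizeOf cs < sizeOf (PTree.leaf a :: cs) := by first
        | (simp; omega)
        | simp
        | omega
      have h2 := (ih (sizeOf (PTree.leaf (N := N) a :: cs)) hn).2 cs r w hsz hs
      simpa [sym2symbol] using h2.append_left [Symbol.terminal a]
    | consNt A t wA r w cs hpt hs =>
      have hszt : sizeOf t < sizeOf (t :: cs) := by first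
        | (simp; omega)
        | simp
        | omega
      have hszc : sizeOf cs < sizeOf (t :: cs) := by first
        | (simp; omega)
        | simp
        | omega
      have h1 := (ih (sizeOf (t :: cs)) hn).1 t A wA hszt hpt
      have h2 := (ih (sizeOf (t :: cs)) hn).2 cs r w hszc hs
      have := (h1.append_right (r.map sym2symbol)).trans
        ((h2.append_left (wA.map Symbol.terminal)))
      simpa [sym2symbol] using this

lemma parse_derives [Fintype N] (G : OCFG N T) {t A w} (hp : ParseFrom G A w t) :
    (mg G).Derives [Symbol.nonterminal A] (w.map Symbol.terminal) :=
  (parse_derives_aux G (sizeOf t + 1)).1 t A w (Nat.lt_succ_self _) hp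

/-- all-terminal parse sequences -/
lemma terminal_seq (G : OCFG N T) (w : List T) :
    ParseSeq G (w.map Sym.tm) w (w.map PTree.leaf) := by
  induction w with
  | nil => exact ParseSeq.nil
  | cons a w ih => exact ParseSeq.consTm a _ _ _ ih

lemma seq_append {G : OCFG N T} {x y : List (Sym N T)} {w1 w2 cs1 cs2}
    (h1 : ParseSeq G x w1 cs1) (h2 : ParseSeq G y w2 cs2) :
    ParseSeq G (x ++ y) (w1 ++ w2) (cs1 ++ cs2) := by
  induction x generalizing w1 cs1 with
  | nil => obtain ⟨rfl, rfl⟩ := h1.nil_inv; simpa using h2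
  | cons s x ih =>
    cases h1 with
    | consTm a r w cs hs => exact ParseSeq.consTm a _ _ _ (ih hs)
    | consNt A t wA r w cs hpt hs =>
      have := ParseSeq.consNt A t wA _ _ _ hpt (ih hs)
      simpa using this

lemma seq_split {G : OCFG N T} {x y : List (Sym N T)} {w cs}
    (h : ParseSeq G (x ++ y) w cs) :
    ∃ w1 w2 cs1 cs2, w = w1 ++ w2 ∧ cs = cs1 ++ cs2 ∧
      ParseSeq G x w1 cs1 ∧ ParseSeq G y w2 cs2 := by
  induction x generalizing w cs with
  | nil => exact ⟨[], w, [], cs, rfl, rfl, ParseSeq.nil, by simpa using h⟩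
  | cons s x ih =>
    cases h with
    | consTm a r w cs hs =>
      obtain ⟨w1, w2, cs1, cs2, rfl, rfl, hx, hy⟩ := ih hs
      exact ⟨a :: w1, w2, _ :: cs1, cs2, rfl, rfl, ParseSeq.consTm a _ _ _ hx, hy⟩
    | consNt A t wA r w cs hpt hs =>
      obtain ⟨w1, w2, cs1, cs2, rfl, rfl, hx, hy⟩ := ih hs
      exact ⟨wA ++ w1, w2, t :: cs1, cs2, by simp, rfl,
        ParseSeq.consNt A t wA _ _ _ hpt hx, hy⟩

lemma parse_of_seq {G : OCFG N T} {A r w cs} (hr : r ∈ G.prods A)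
    (hs : ParseSeq G r w cs) : ∃ t, ParseFrom G A w t := by
  obtain ⟨i, hi⟩ := exists_index_of_mem hr
  rcases eq_or_ne r [] with rfl | hne
  · obtain ⟨rfl, rfl⟩ := hs.nil_inv
    exact ⟨_, ParseFrom.epsNode A i hi⟩
  · exact ⟨_, ParseFrom.node A i r w cs hi hne hs⟩

lemma derives_parse [Fintype N] (G : OCFG N T) {α} {w : List T}
    (h : (mg G).Derives α (w.map Symbol.terminal)) :
    ∃ cs, ParseSeq G (α.map symbol2sym) w cs := by
  induction h using Relation.ReflTransGen.head_induction_on with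
  | refl =>
    refine ⟨w.map PTree.leaf, ?_⟩
    have : (List.map (Symbol.terminal (N := N)) w).map symbol2sym = w.map Sym.tm := by
      simp [symbol2sym, Function.comp]
    rw [this]
    exact terminal_seq G w
  | head hstep _ ih =>
    obtain ⟨cs, hcs⟩ := ih
    obtain ⟨rl, hrl, hrw⟩ := hstep
    obtain ⟨p, q, heq, rfl⟩ := hrw.exists_parts
    obtain ⟨A, r, hrA, rfl⟩ := (mem_mg_rules G _).1 hrl
    subst heq
    have hmapr : List.map (symbol2sym ∘ sym2symbol) r = r := by
      simp [Function.comp_def]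
    simp only [List.map_append, List.map_map, hmapr] at hcs
    rw [List.append_assoc] at hcs
    obtain ⟨w1, w23, cs1, cs23, rfl, rfl, hp1, h23⟩ := seq_split hcs
    obtain ⟨w2, w3, cs2, cs3, rfl, rfl, hr2, hq3⟩ := seq_split h23
    obtain ⟨t, ht⟩ := parse_of_seq hrA hr2
    refine ⟨cs1 ++ (t :: cs3), ?_⟩
    have := seq_append hp1 (ParseSeq.consNt A t w2 _ w3 _ ht hq3)
    simpa [symbol2sym] using this

end Ocfg
namespace Ocfg

attribute [local instance] Classical.propDecidable

variable {N T : Type}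

lemma langOf_mg [Fintype N] (G : OCFG N T) : langOf G = (mg G).language := by
  ext w
  constructor
  · rintro ⟨t, ht⟩
    exact parse_derives G ht
  · intro h
    have h' : (mg G).Derives [Symbol.nonterminal G.start] (w.map Symbol.terminal) := h
    obtain ⟨cs, hcs⟩ := derives_parse G h'
    simp only [List.map_cons, List.map_nil, symbol2sym] at hcs
    cases hcs with
    | consNt A t wA r w' cs' hpt hs =>
      obtain ⟨rfl, rfl⟩ := hs.nil_inv
      exact ⟨t, by simpa using hpt⟩

/-- mapping of symbols along a nonterminal map -/
def smap {N' : Type} (f : N → N') : Symbol T N → Symbol T N'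
  | .terminal a => .terminal a
  | .nonterminal A => .nonterminal (f A)

@[simp] lemma smap_terminal_map {N' : Type} (f : N → N') (w : List T) :
    (w.map Symbol.terminal).map (smap f) = w.map Symbol.terminal := by
  simp [smap, Function.comp_def]

/-- generic derivation transfer with an invariant on allowed nonterminals -/
lemma derives_transfer (g₁ g₂ : ContextFreeGrammar T) (f : g₁.NT → g₂.NT)
    (P : g₁.NT → Prop)
    (H : ∀ r ∈ g₁.rules, P r.input →
      (∀ B, Symbol.nonterminal B ∈ r.output → P B) ∧
      (⟨f r.input, r.output.map (smap f)⟩ : ContextFreeRule T g₂.NT) ∈ g₂.rules) :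
    ∀ {u v}, g₁.Derives u v → (∀ B, Symbol.nonterminal B ∈ u → P B) →
      g₂.Derives (u.map (smap f)) (v.map (smap f)) := by
  intro u v h
  induction h using Relation.ReflTransGen.head_induction_on with
  | refl => intro _; rfl
  | head hstep _ ih =>
    intro hu
    obtain ⟨rl, hrl, hrw⟩ := hstep
    obtain ⟨p, q, heq, heq2⟩ := hrw.exists_parts
    subst heq heq2
    have hPin : P rl.input := hu rl.input (by simp)
    obtain ⟨hout, hmem⟩ := H rl hrl hPin
    have hnext : ∀ B, Symbol.nonterminal B ∈ p ++ rl.output ++ q → P B := by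
      intro B hB
      simp only [List.mem_append] at hB
      rcases hB with hB | hB
      · rcases hB with hB | hB
        · exact hu B (by simp [hB])
        · exact hout B hB
      · exact hu B (by simp [hB])
    have hstep₂ : g₂.Produces ((p ++ [Symbol.nonterminal rl.input] ++ q).map (smap f))
        ((p ++ rl.output ++ q).map (smap f)) := by
      refine ⟨⟨f rl.input, rl.output.map (smap f)⟩, hmem, ?_⟩
      simp only [List.map_append, List.map_cons, List.map_nil, smap]
      exact ContextFreeRule.rewrites_of_exists_parts _ _ _
    exact hstep₂.trans_derives (ih hnext)

section Shrink

variable (g : ContextFreeGrammar.{0} T)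

/-- nonterminals occurring in the rules or as the start symbol -/
noncomputable def usedNTs : Finset g.NT :=
  letI := Classical.decEq g.NT
  insert g.initial (g.rules.biUnion fun r =>
    insert r.input (r.output.filterMap fun s =>
      match s with
      | Symbol.nonterminal A => some A
      | _ => none).toFinset)

lemma initial_mem_usedNTs : g.initial ∈ usedNTs g := by
  classical
  simp [usedNTs]

lemma input_mem_usedNTs {r : ContextFreeRule T g.NT} (hr : r ∈ g.rules) :
    r.input ∈ usedNTs g := by
  classical
  simp only [usedNTs, Finset.mem_insert, Finset.mem_biUnion]
  exact Or.inr ⟨r, hr, by simp⟩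

lemma output_mem_usedNTs {r : ContextFreeRule T g.NT} (hr : r ∈ g.rules) {B : g.NT}
    (hB : Symbol.nonterminal B ∈ r.output) : B ∈ usedNTs g := by
  classical
  simp only [usedNTs, Finset.mem_insert, Finset.mem_biUnion]
  refine Or.inr ⟨r, hr, ?_⟩
  simp only [Finset.mem_insert, List.mem_toFinset, List.mem_filterMap]
  exact Or.inr ⟨Symbol.nonterminal B, hB, rfl⟩

/-- restricted nonterminal type -/
def NTb : Type := {x : g.NT // x ∈ usedNTs g}

noncomputable instance : Fintype (NTb g) := by
  unfold NTb; infer_instance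

noncomputable def trb : g.NT → NTb g := fun A =>
  if h : A ∈ usedNTs g then ⟨A, h⟩ else ⟨g.initial, initial_mem_usedNTs g⟩

lemma trb_val {A : g.NT} (h : A ∈ usedNTs g) : (trb g A).1 = A := by
  simp [trb, h]

/-- translate symbols of g into our Sym over the restricted type -/
noncomputable def trSymb : Symbol T g.NT → Sym (NTb g) T
  | .terminal a => .tm a
  | .nonterminal A => .nt (trb g A)

/-- the oCFG associated to a Mathlib grammar -/
noncomputable def ocfgOf : OCFG (NTb g) T where
  prods B := g.rules.toList.filterMap fun r =>
    if r.input = B.1 then some (r.output.map (trSymb g)) else none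
  start := trb g g.initial

lemma mem_ocfgOf_prods {B : NTb g} {r' : List (Sym (NTb g) T)} :
    r' ∈ (ocfgOf g).prods B ↔ ∃ r ∈ g.rules, r.input = B.1 ∧ r' = r.output.map (trSymb g) := by
  simp only [ocfgOf, List.mem_filterMap, Finset.mem_toList]
  constructor
  · rintro ⟨r, hr, h⟩
    by_cases hin : r.input = B.1
    · rw [if_pos hin] at h
      exact ⟨r, hr, hin, (Option.some_injective _ h).symm⟩
    · rw [if_neg hin] at h; exact absurd h (by simp)
  · rintro ⟨r, hr, hin, rfl⟩
    exact ⟨r, hr, by rw [if_pos hin]⟩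

lemma ocfgOf_language : langOf (ocfgOf g) = g.language := by
  rw [langOf_mg]
  ext w
  simp only [ContextFreeGrammar.mem_language_iff]
  constructor
  · -- from the restricted grammar back to g, via f := Subtype.val
    intro h
    have H : ∀ r ∈ (mg (ocfgOf g)).rules, True →
        (∀ B, Symbol.nonterminal B ∈ r.output → True) ∧
        (⟨Subtype.val r.input, r.output.map (smap Subtype.val)⟩ :
          ContextFreeRule T g.NT) ∈ g.rules := by
      rintro rl hrl -
      refine ⟨fun _ _ => trivial, ?_⟩
      obtain ⟨A, r, hr, rfl⟩ := (mem_mg_rules (ocfgOf g) rl).1 hrl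
      obtain ⟨r₀, hr₀, hin, rfl⟩ := (mem_ocfgOf_prods g).1 hr
      have : ((r₀.output.map (trSymb g)).map sym2symbol).map (smap Subtype.val)
          = r₀.output := by
        erw [List.map_map, List.map_map]
        refine List.map_congr_left ?_ |>.trans (List.map_id _)
        intro s hs
        cases s with
        | terminal a => rfl
        | nonterminal B =>
          simp only [Function.comp_apply, trSymb, sym2symbol, smap, id_eq]
          exact congrArg Symbol.nonterminal (trb_val g (output_mem_usedNTs g hr₀ hs))
      rw [this, ← hin]
      exact hr₀
    have := derives_transfer (mg (ocfgOf g)) g Subtype.val (fun _ => True) H h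
      (fun _ _ => trivial)
    simpa [smap, ocfgOf, trb_val g (initial_mem_usedNTs g), Function.comp_def] using this
  · -- from g to the restricted grammar, via trb with invariant
    intro h
    have H : ∀ r ∈ g.rules, r.input ∈ usedNTs g →
        (∀ B, Symbol.nonterminal B ∈ r.output → B ∈ usedNTs g) ∧
        (⟨trb g r.input, r.output.map (smap (trb g))⟩ :
          ContextFreeRule T (mg (ocfgOf g)).NT) ∈ (mg (ocfgOf g)).rules := by
      intro r hr hin
      refine ⟨fun B hB => output_mem_usedNTs g hr hB, ?_⟩
      refine (mem_mg_rules (ocfgOf g) _).2 ⟨trb g r.input, r.output.map (trSymb g), ?_, ?_⟩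
      · exact (mem_ocfgOf_prods g).2 ⟨r, hr, (trb_val g hin).symm, rfl⟩
      · congr 1
        rw [List.map_map]
        refine List.map_congr_left ?_
        intro s _
        cases s with
        | terminal a => rfl
        | nonterminal B => rfl
    have := derives_transfer g (mg (ocfgOf g)) (trb g) (fun A => A ∈ usedNTs g) H h
      (by intro B hB; simp at hB; subst hB; exact initial_mem_usedNTs g)
    simpa [smap, ocfgOf, Function.comp_def] using this

end Shrink

end Ocfg
namespace Ocfg

attribute [local instance] Classical.propDecidable

variable {N T : Type}

/-- A nonterminal that can derive the empty word. -/
def Nullable (G : OCFG N T) (A : N) : Prop := ∃ t, ParseFrom G A [] t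

/-- All ways of deleting occurrences of nullable nonterminals from a rhs. -/
noncomputable def variants (G : OCFG N T) : List (Sym N T) → List (List (Sym N T))
  | [] => [[]]
  | .tm a :: r => (variants G r).map (Sym.tm a :: ·)
  | .nt B :: r =>
      (if Nullable G B then variants G r else []) ++ (variants G r).map (Sym.nt B :: ·)

lemma variants_nil (G : OCFG N T) : variants G ([] : List (Sym N T)) = [[]] := rfl

lemma nil_variant {G : OCFG N T} {r' : List (Sym N T)} (h : r' ∈ variants G []) : r' = [] := by
  rw [variants_nil] at h; simpa using h

/-- restoring parse sequences for the original rhs from a variant -/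
lemma seq_of_variant {G : OCFG N T} :
    ∀ (r : List (Sym N T)) {r' w cs'}, r' ∈ variants G r → ParseSeq G r' w cs' →
      ∃ cs, ParseSeq G r w cs := by
  intro r
  induction r with
  | nil =>
    intro r' w cs' hv hs
    rw [nil_variant hv] at hs
    obtain ⟨rfl, rfl⟩ := hs.nil_inv
    exact ⟨[], ParseSeq.nil⟩
  | cons s r ih =>
    intro r' w cs' hv hs
    cases s with
    | tm a =>
      simp only [variants, List.mem_map] at hv
      obtain ⟨r'', hr'', rfl⟩ := hv
      cases hs with
      | consTm a r0 w0 cs0 hs0 =>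
        obtain ⟨cs, hcs⟩ := ih hr'' hs0
        exact ⟨_, ParseSeq.consTm a _ _ _ hcs⟩
    | nt B =>
      simp only [variants, List.mem_append, List.mem_map] at hv
      rcases hv with hv | ⟨r'', hr'', rfl⟩
      · -- B was erased, so it is nullable
        by_cases hB : Nullable G B
        · rw [if_pos hB] at hv
          obtain ⟨t0, ht0⟩ := hB
          obtain ⟨cs, hcs⟩ := ih hv hs
          refine ⟨t0 :: cs, ?_⟩
          have := ParseSeq.consNt B t0 [] r w cs ht0 hcs
          simpa using this
        · rw [if_neg hB] at hv; simp at hv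
      · cases hs with
        | consNt _ t wA r0 w0 cs0 hpt hs0 =>
          obtain ⟨cs, hcs⟩ := ih hr'' hs0
          exact ⟨_, ParseSeq.consNt B t wA _ _ _ hpt hcs⟩

/-- one unit-expansion step -/
def UStep (G : OCFG N T) (C D : N) : Prop :=
  ∃ r ∈ G.prods C, [Sym.nt D] ∈ variants G r

def UReach (G : OCFG N T) : N → N → Prop := Relation.ReflTransGen (UStep G)

/-- a rhs that is neither empty nor a single nonterminal -/
def goodRhs : List (Sym N T) → Bool
  | [] => false
  | [Sym.nt _] => false
  | _ => true

lemma goodRhs_false_iff (r : List (Sym N T)) :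
    goodRhs r = false ↔ r = [] ∨ ∃ B, r = [Sym.nt B] := by
  match r with
  | [] => simp [goodRhs]
  | [Sym.nt B] => simp [goodRhs]
  | [Sym.tm a] => simp [goodRhs]
  | s₁ :: s₂ :: rest => cases s₁ <;> simp [goodRhs]

lemma goodRhs_ne_nil {r : List (Sym N T)} (h : goodRhs r = true) : r ≠ [] := by
  rintro rfl; simp [goodRhs] at h

lemma goodRhs_ne_unit {r : List (Sym N T)} (h : goodRhs r = true) (B : N) :
    r ≠ [Sym.nt B] := by
  rintro rfl; simp [goodRhs] at h

/-- the ε-free and unit-free grammar -/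
noncomputable def elim [Fintype N] (G : OCFG N T) : OCFG N T where
  prods A := ((Finset.univ.filter (fun B => UReach G A B)).toList).flatMap
      (fun B => ((G.prods B).flatMap (variants G)).filter goodRhs)
  start := G.start

lemma mem_elim_prods [Fintype N] (G : OCFG N T) {A : N} {r' : List (Sym N T)} :
    r' ∈ (elim G).prods A ↔
      ∃ B, UReach G A B ∧ ∃ r ∈ G.prods B, r' ∈ variants G r ∧ goodRhs r' = true := by
  simp only [elim, List.mem_flatMap, Finset.mem_toList, Finset.mem_filter, Finset.mem_univ,
    true_and, List.mem_filter]
  constructor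
  · rintro ⟨B, hB, ⟨r, hr, hv⟩, hg⟩
    exact ⟨B, hB, r, hr, hv, hg⟩
  · rintro ⟨B, hB, r, hr, hv, hg⟩
    exact ⟨B, hB, ⟨r, hr, hv⟩, hg⟩

lemma elim_prods_mono [Fintype N] (G : OCFG N T) {A B : N} (h : UReach G A B) :
    ∀ r' ∈ (elim G).prods B, r' ∈ (elim G).prods A := by
  intro r' hr'
  obtain ⟨C, hC, hrest⟩ := (mem_elim_prods G).1 hr'
  exact (mem_elim_prods G).2 ⟨C, h.trans hC, hrest⟩

lemma elim_good [Fintype N] (G : OCFG N T) {A : N} {r' : List (Sym N T)}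
    (h : r' ∈ (elim G).prods A) : goodRhs r' = true := by
  obtain ⟨_, _, _, _, _, hg⟩ := (mem_elim_prods G).1 h
  exact hg

/-- walking a unit chain in `G` -/
lemma ureach_parse (G : OCFG N T) {A B : N} (hAB : UReach G A B) {w : List T}
    (h : ∃ t, ParseFrom G B w t) : ∃ t, ParseFrom G A w t := by
  induction hAB using Relation.ReflTransGen.head_induction_on with
  | refl => exact h
  | head hstep _ ih₂ =>
    obtain ⟨t₀, ht₀⟩ := ih₂
    obtain ⟨r₀, hr₀, hv₀⟩ := hstep
    have hseq := ParseSeq.consNt _ t₀ w [] [] [] ht₀ ParseSeq.nil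
    rw [List.append_nil] at hseq
    obtain ⟨cs₂, hcs₂⟩ := seq_of_variant r₀ hv₀ hseq
    exact parse_of_seq hr₀ hcs₂

/-- soundness: parses in `elim G` give parses in `G` (seq and tree versions) -/
lemma elim_sound_aux [Fintype N] (G : OCFG N T) : ∀ n : ℕ,
    (∀ (t' : PTree N T) A w, sizeOf t' < n → ParseFrom (elim G) A w t' →
      ∃ t, ParseFrom G A w t) ∧
    (∀ (cs' : List (PTree N T)) r w, sizeOf cs' < n → ParseSeq (elim G) r w cs' →
      ∃ cs, ParseSeq G r w cs) := by
  intro n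
  induction n using Nat.strong_induction_on with
  | _ n ih =>
  constructor
  · rintro t' A w hn hp
    cases hp with
    | epsNode A i hi =>
      exact absurd (elim_good G (rule_mem_of_getElem? hi)) (by simp [goodRhs])
    | node A i r' w cs' hi hne hs =>
      obtain ⟨B, hAB, r, hr, hv, hg⟩ := (mem_elim_prods G).1 (rule_mem_of_getElem? hi)
      have hszcs : sizeOf cs' < sizeOf (PTree.node A i cs') := by
        first
        | (simp; omega)
        | simp
        | omega
      obtain ⟨cs₀, hcs₀⟩ := (ih _ hn).2 cs' r' w hszcs hs
      obtain ⟨cs₁, hcs₁⟩ := seq_of_variant r hv hcs₀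
      exact ureach_parse G hAB (parse_of_seq hr hcs₁)
  · rintro cs' r w hn hs
    cases hs with
    | nil => exact ⟨[], ParseSeq.nil⟩
    | consTm a r w cs hs =>
      have hsz : sizeOf cs < sizeOf (PTree.leaf a :: cs) := by
        first
        | (simp; omega)
        | simp
        | omega
      obtain ⟨cs₀, h₀⟩ := (ih _ hn).2 cs r w hsz hs
      exact ⟨_, ParseSeq.consTm a _ _ _ h₀⟩
    | consNt A t wA r w cs hpt hs =>
      have hszt : sizeOf t < sizeOf (t :: cs) := by
        first
        | (simp; omega)
        | simp
        | omega
      have hszc : sizeOf cs < sizeOf (t :: cs) := by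
        first
        | (simp; omega)
        | simp
        | omega
      obtain ⟨t₀, ht₀⟩ := (ih _ hn).1 t A wA hszt hpt
      obtain ⟨cs₀, h₀⟩ := (ih _ hn).2 cs r w hszc hs
      exact ⟨_, ParseSeq.consNt A t₀ wA _ _ _ ht₀ h₀⟩

lemma elim_sound [Fintype N] (G : OCFG N T) {A w t'} (h : ParseFrom (elim G) A w t') :
    ∃ t, ParseFrom G A w t :=
  (elim_sound_aux G (sizeOf t' + 1)).1 t' A w (Nat.lt_succ_self _) h

/-- building a parse in `elim G` from a parse sequence for a good variant -/
lemma elim_parse_of_good_seq [Fintype N] (G : OCFG N T) {A : N} {r r' w cs'}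
    (hr : r ∈ G.prods A) (hv : r' ∈ variants G r) (hg : goodRhs r' = true)
    (hs : ParseSeq (elim G) r' w cs') : ∃ t', ParseFrom (elim G) A w t' := by
  have hmem : r' ∈ (elim G).prods A :=
    (mem_elim_prods G).2 ⟨A, Relation.ReflTransGen.refl, r, hr, hv, hg⟩
  obtain ⟨i, hi⟩ := exists_index_of_mem hmem
  exact ⟨_, ParseFrom.node A i r' w cs' hi (goodRhs_ne_nil hg) hs⟩

/-- re-rooting: a parse from B in `elim G` is a parse from A when UReach A B -/
lemma elim_reroot [Fintype N] (G : OCFG N T) {A B : N} (hAB : UReach G A B) {w t'}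
    (h : ParseFrom (elim G) B w t') : ∃ t'', ParseFrom (elim G) A w t'' := by
  cases h with
  | epsNode B i hi =>
    exact absurd (elim_good G (rule_mem_of_getElem? hi)) (by simp [goodRhs])
  | node B i r'' w cs'' hi hne hs =>
    have : r'' ∈ (elim G).prods A :=
      elim_prods_mono G hAB r'' (rule_mem_of_getElem? hi)
    obtain ⟨j, hj⟩ := exists_index_of_mem this
    exact ⟨_, ParseFrom.node A j r'' w cs'' hj hne hs⟩

/-- completeness: parses of nonempty words survive in `elim G` -/
lemma elim_complete_aux [Fintype N] (G : OCFG N T) : ∀ n : ℕ,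
    (∀ (t : PTree N T) A w, sizeOf t < n → ParseFrom G A w t → w ≠ [] →
      ∃ t', ParseFrom (elim G) A w t') ∧
    (∀ (cs : List (PTree N T)) r w, sizeOf cs < n → ParseSeq G r w cs →
      ∃ r' cs', r' ∈ variants G r ∧ ParseSeq (elim G) r' w cs') := by
  intro n
  induction n using Nat.strong_induction_on with
  | _ n ih =>
  constructor
  · rintro t A w hn hp hwne
    cases hp with
    | epsNode A i hi => exact absurd rfl hwne
    | node A i r w cs hi hne hs =>
      have hszcs : sizeOf cs < sizeOf (PTree.node A i cs) := by
        first
        | (simp; omega)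
        | simp
        | omega
      obtain ⟨r', cs', hv, hs'⟩ := (ih _ hn).2 cs r w hszcs hs
      cases hgb : goodRhs r' with
      | false =>
        rcases (goodRhs_false_iff r').1 hgb with rfl | ⟨B, rfl⟩
        · obtain ⟨rfl, rfl⟩ := hs'.nil_inv
          exact absurd rfl hwne
        · cases hs' with
          | consNt B t' wB r₀ w₀ cs₀ hpt' hs₀ =>
            obtain ⟨rfl, rfl⟩ := hs₀.nil_inv
            rw [List.append_nil]
            have hstep : UStep G A B := ⟨r, rule_mem_of_getElem? hi, hv⟩
            exact elim_reroot G (Relation.ReflTransGen.single hstep) hpt'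
      | true => exact elim_parse_of_good_seq G (rule_mem_of_getElem? hi) hv hgb hs'
  · rintro cs r w hn hs
    cases hs with
    | nil => exact ⟨[], [], by simp [variants_nil], ParseSeq.nil⟩
    | consTm a r w cs hs =>
      have hsz : sizeOf cs < sizeOf (PTree.leaf a :: cs) := by
        first
        | (simp; omega)
        | simp
        | omega
      obtain ⟨r', cs', hv, hs'⟩ := (ih _ hn).2 cs r w hsz hs
      exact ⟨Sym.tm a :: r', _, by simp only [variants, List.mem_map]; exact ⟨r', hv, rfl⟩,
        ParseSeq.consTm a _ _ _ hs'⟩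
    | consNt A t wA r w cs hpt hs =>
      have hszt : sizeOf t < sizeOf (t :: cs) := by
        first
        | (simp; omega)
        | simp
        | omega
      have hszc : sizeOf cs < sizeOf (t :: cs) := by
        first
        | (simp; omega)
        | simp
        | omega
      obtain ⟨r', cs', hv, hs'⟩ := (ih _ hn).2 cs r w hszc hs
      rcases eq_or_ne wA [] with rfl | hwA
      · -- erase this nonterminal
        have hB : Nullable G A := ⟨t, hpt⟩
        refine ⟨r', cs', ?_, by simpa using hs'⟩
        simp only [variants, List.mem_append]
        exact Or.inl (by rw [if_pos hB]; exact hv)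
      · obtain ⟨t', ht'⟩ := (ih _ hn).1 t A wA hszt hpt hwA
        refine ⟨Sym.nt A :: r', t' :: cs', ?_, ParseSeq.consNt A t' wA _ _ _ ht' hs'⟩
        simp only [variants, List.mem_append, List.mem_map]
        exact Or.inr ⟨r', hv, rfl⟩

lemma elim_complete [Fintype N] (G : OCFG N T) {A w t} (h : ParseFrom G A w t)
    (hw : w ≠ []) : ∃ t', ParseFrom (elim G) A w t' :=
  (elim_complete_aux G (sizeOf t + 1)).1 t A w (Nat.lt_succ_self _) h hw

end Ocfg
namespace Ocfg

attribute [local instance] Classical.propDecidable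

variable {N T : Type}

def liftSym : Sym N T → Sym (Option N) T
  | .nt A => .nt (some A)
  | .tm a => .tm a

/-- add a fresh start symbol (with an optional ε-rule) on top of `G` -/
noncomputable def addStart (G : OCFG N T) (hasEps : Prop) : OCFG (Option N) T where
  prods o := match o with
    | some A => (G.prods A).map (List.map liftSym)
    | none => ((G.prods G.start).map (List.map liftSym)) ++ (if hasEps then [[]] else [])
  start := none

lemma addStart_prods_some (G : OCFG N T) (hE : Prop) (A : N) :
    (addStart G hE).prods (some A) = (G.prods A).map (List.map liftSym) := rfl

lemma addStart_prods_none (G : OCFG N T) (hE : Prop) :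
    (addStart G hE).prods none
      = ((G.prods G.start).map (List.map liftSym)) ++ (if hE then [[]] else []) := rfl

/-- lifting parses upward -/
lemma addStart_up_aux (G : OCFG N T) (hE : Prop) : ∀ n : ℕ,
    (∀ (t : PTree N T) A w, sizeOf t < n → ParseFrom G A w t →
      ∃ t', ParseFrom (addStart G hE) (some A) w t') ∧
    (∀ (cs : List (PTree N T)) r w, sizeOf cs < n → ParseSeq G r w cs →
      ∃ cs', ParseSeq (addStart G hE) (r.map liftSym) w cs') := by
  intro n
  induction n using Nat.strong_induction_on with
  | _ n ih =>
  constructor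
  · rintro t A w hn hp
    cases hp with
    | epsNode A i hi =>
      refine ⟨_, ParseFrom.epsNode (some A) i ?_⟩
      rw [addStart_prods_some, List.getElem?_map, hi]
      rfl
    | node A i r w cs hi hne hs =>
      have hszcs : sizeOf cs < sizeOf (PTree.node A i cs) := by
        first
        | (simp; omega)
        | simp
        | omega
      obtain ⟨cs', hcs'⟩ := (ih _ hn).2 cs r w hszcs hs
      refine ⟨_, ParseFrom.node (some A) i (r.map liftSym) w cs' ?_ (by simpa using hne) hcs'⟩
      rw [addStart_prods_some, List.getElem?_map, hi]
      rfl
  · rintro cs r w hn hs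
    cases hs with
    | nil => exact ⟨[], ParseSeq.nil⟩
    | consTm a r w cs hs =>
      have hsz : sizeOf cs < sizeOf (PTree.leaf a :: cs) := by
        first
        | (simp; omega)
        | simp
        | omega
      obtain ⟨cs', h'⟩ := (ih _ hn).2 cs r w hsz hs
      exact ⟨_, ParseSeq.consTm a _ _ _ h'⟩
    | consNt A t wA r w cs hpt hs =>
      have hszt : sizeOf t < sizeOf (t :: cs) := by
        first
        | (simp; omega)
        | simp
        | omega
      have hszc : sizeOf cs < sizeOf (t :: cs) := by
        first
        | (simp; omega)
        | simp
        | omega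
      obtain ⟨t', ht'⟩ := (ih _ hn).1 t A wA hszt hpt
      obtain ⟨cs', h'⟩ := (ih _ hn).2 cs r w hszc hs
      exact ⟨_, ParseSeq.consNt (some A) t' wA _ _ _ ht' h'⟩

/-- lifting parses downward -/
lemma addStart_down_aux (G : OCFG N T) (hE : Prop) : ∀ n : ℕ,
    (∀ (t' : PTree (Option N) T) A w, sizeOf t' < n →
      ParseFrom (addStart G hE) (some A) w t' → ∃ t, ParseFrom G A w t) ∧
    (∀ (cs' : List (PTree (Option N) T)) (r : List (Sym N T)) w, sizeOf cs' < n →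
      ParseSeq (addStart G hE) (r.map liftSym) w cs' → ∃ cs, ParseSeq G r w cs) := by
  intro n
  induction n using Nat.strong_induction_on with
  | _ n ih =>
  constructor
  · rintro t' A w hn hp
    cases hp with
    | epsNode _ i hi =>
      rw [addStart_prods_some, List.getElem?_map] at hi
      obtain ⟨r, hr, hmap⟩ := Option.map_eq_some_iff.1 hi
      have : r = [] := by
        cases r with
        | nil => rfl
        | cons s r => simp at hmap
      subst this
      exact ⟨_, ParseFrom.epsNode A i hr⟩
    | node _ i r' w cs' hi hne hs =>
      rw [addStart_prods_some, List.getElem?_map] at hi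
      obtain ⟨r, hr, hmap⟩ := Option.map_eq_some_iff.1 hi
      subst hmap
      have hszcs : sizeOf cs' < sizeOf (PTree.node (some A) i cs') := by
        first
        | (simp; omega)
        | simp
        | omega
      obtain ⟨cs, hcs⟩ := (ih _ hn).2 cs' r w hszcs hs
      refine ⟨_, ParseFrom.node A i r w cs hr (by rintro rfl; simp at hne) hcs⟩
  · rintro cs' r w hn hs
    cases r with
    | nil =>
      rw [List.map_nil] at hs
      obtain ⟨rfl, rfl⟩ := hs.nil_inv
      exact ⟨[], ParseSeq.nil⟩
    | cons s r =>
      cases s with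
      | tm a =>
        rw [List.map_cons] at hs
        cases hs with
        | consTm _ _ w0 cs0 hs0 =>
          have hsz : sizeOf cs0 < sizeOf (PTree.leaf (N := Option N) a :: cs0) := by
            first
            | (simp; omega)
            | simp
            | omega
          obtain ⟨cs, hcs⟩ := (ih _ hn).2 cs0 r w0 hsz hs0
          exact ⟨_, ParseSeq.consTm a _ _ _ hcs⟩
      | nt A =>
        rw [List.map_cons] at hs
        cases hs with
        | consNt _ t wA _ w0 cs0 hpt hs0 =>
          have hszt : sizeOf t < sizeOf (t :: cs0) := by
            first
            | (simp; omega)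
            | simp
            | omega
          have hszc : sizeOf cs0 < sizeOf (t :: cs0) := by
            first
            | (simp; omega)
            | simp
            | omega
          obtain ⟨t0, ht0⟩ := (ih _ hn).1 t A wA hszt hpt
          obtain ⟨cs, hcs⟩ := (ih _ hn).2 cs0 r w0 hszc hs0
          exact ⟨_, ParseSeq.consNt A t0 wA _ _ _ ht0 hcs⟩

end Ocfg
namespace Ocfg

attribute [local instance] Classical.propDecidable

variable {N T : Type}

/-- the language of `addStart` at the root -/
lemma addStart_lang (G : OCFG N T) (hE : Prop) (w : List T) :
    (∃ t, ParseFrom (addStart G hE) none w t) ↔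
      ((∃ t, ParseFrom G G.start w t) ∨ (hE ∧ w = [])) := by
  constructor
  · rintro ⟨t, ht⟩
    cases ht with
    | epsNode _ i hi =>
      have hmem := rule_mem_of_getElem? hi
      rw [addStart_prods_none] at hmem
      rcases List.mem_append.1 hmem with hmem | hmem
      · obtain ⟨r, hr, hmap⟩ := List.mem_map.1 hmem
        have : r = [] := by cases r with
          | nil => rfl
          | cons s r => simp at hmap
        subst this
        obtain ⟨j, hj⟩ := exists_index_of_mem hr
        exact Or.inl ⟨_, ParseFrom.epsNode G.start j hj⟩
      · by_cases h : hE
        · exact Or.inr ⟨h, rfl⟩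
        · rw [if_neg h] at hmem; simp at hmem
    | node _ i r' _ cs hi hne hs =>
      have hmem := rule_mem_of_getElem? hi
      rw [addStart_prods_none] at hmem
      rcases List.mem_append.1 hmem with hmem | hmem
      · obtain ⟨r, hr, hmap⟩ := List.mem_map.1 hmem
        subst hmap
        obtain ⟨cs0, hcs0⟩ := (addStart_down_aux G hE (sizeOf cs + 1)).2 cs r w
          (Nat.lt_succ_self _) hs
        exact Or.inl (parse_of_seq hr hcs0)
      · by_cases h : hE
        · rw [if_pos h] at hmem
          simp at hmem
          exact absurd hmem hne
        · rw [if_neg h] at hmem; simp at hmem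
  · rintro (⟨t, ht⟩ | ⟨h, rfl⟩)
    · obtain ⟨t', ht'⟩ := (addStart_up_aux G hE (sizeOf t + 1)).1 t G.start w
        (Nat.lt_succ_self _) ht
      cases ht' with
      | epsNode _ i hi =>
        rw [addStart_prods_some] at hi
        have hlt : i < ((G.prods G.start).map (List.map liftSym)).length :=
          (List.getElem?_eq_some_iff.1 hi).1
        refine ⟨_, ParseFrom.epsNode (none : Option N) i ?_⟩
        rw [addStart_prods_none, List.getElem?_append, if_pos hlt]
        exact hi
      | node _ i r' w cs hi hne hs =>
        rw [addStart_prods_some] at hi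
        have hlt : i < ((G.prods G.start).map (List.map liftSym)).length :=
          (List.getElem?_eq_some_iff.1 hi).1
        refine ⟨_, ParseFrom.node (none : Option N) i r' w cs ?_ hne hs⟩
        rw [addStart_prods_none, List.getElem?_append, if_pos hlt]
        exact hi
    · have hmem : ([] : List (Sym (Option N) T)) ∈ (addStart G hE).prods none := by
        rw [addStart_prods_none, if_pos h]
        exact List.mem_append_right _ (by simp)
      obtain ⟨i, hi⟩ := exists_index_of_mem hmem
      exact ⟨_, ParseFrom.epsNode none i hi⟩

/- ### index sequences -/

@[simp] lemma idxSeq_leaf (a : T) : (PTree.leaf (N := N) a).idxSeq = [] := by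
  rw [PTree.idxSeq]

@[simp] lemma idxSeq_eps : (PTree.eps (N := N) (T := T)).idxSeq = [] := by
  rw [PTree.idxSeq]

lemma idxSeq_node (A : N) (i : ℕ) (cs : List (PTree N T)) :
    (PTree.node A i cs).idxSeq = i :: (cs.map PTree.idxSeq).flatten := by
  rw [PTree.idxSeq, List.attach_map_val]

@[simp] lemma numRules_leaf (a : T) : (PTree.leaf (N := N) a).numRules = 0 := by
  rw [PTree.numRules]

@[simp] lemma numRules_eps : (PTree.eps (N := N) (T := T)).numRules = 0 := by
  rw [PTree.numRules]

lemma numRules_node (A : N) (i : ℕ) (cs : List (PTree N T)) :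
    (PTree.node A i cs).numRules = 1 + (cs.map PTree.numRules).sum := by
  rw [PTree.numRules, List.attach_map_val]
  rfl

/-- `idxSeq` has length `numRules` -/
lemma idxSeq_length : ∀ n : ℕ, ∀ t : PTree N T, sizeOf t < n →
    t.idxSeq.length = t.numRules := by
  intro n
  induction n using Nat.strong_induction_on with
  | _ n ih =>
  intro t hn
  cases t with
  | leaf a => simp
  | eps => simp
  | node A i cs =>
    rw [idxSeq_node, numRules_node, List.length_cons, List.length_flatten, List.map_map]
    have : List.map (List.length ∘ PTree.idxSeq) cs = List.map PTree.numRules cs := by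
      refine List.map_congr_left ?_
      intro c hc
      have h1 : sizeOf c < sizeOf cs := List.sizeOf_lt_of_mem hc
      have h2 : sizeOf cs < sizeOf (PTree.node A i cs) := by
        first
        | (simp; omega)
        | simp
        | omega
      exact ih (sizeOf cs) (by omega) c h1
    rw [this]
    omega

/-- determinism: the index sequence determines the parse tree -/
lemma det_aux (G : OCFG N T) : ∀ n : ℕ,
    (∀ (t : PTree N T) A w s t' w' s', sizeOf t < n →
      ParseFrom G A w t → ParseFrom G A w' t' →
      t.idxSeq ++ s = t'.idxSeq ++ s' → t = t' ∧ w = w' ∧ s = s') ∧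
    (∀ (cs : List (PTree N T)) r w s cs' w' s', sizeOf cs < n →
      ParseSeq G r w cs → ParseSeq G r w' cs' →
      (cs.map PTree.idxSeq).flatten ++ s = (cs'.map PTree.idxSeq).flatten ++ s' →
      cs = cs' ∧ w = w' ∧ s = s') := by
  intro n
  induction n using Nat.strong_induction_on with
  | _ n ih =>
  constructor
  · rintro t A w s t' w' s' hn hp hp' heq
    cases hp with
    | epsNode _ i hi =>
      cases hp' with
      | epsNode _ i' hi' =>
        rw [idxSeq_node, idxSeq_node] at heq
        simp only [List.map_cons, List.map_nil, idxSeq_eps, List.flatten_cons,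
          List.flatten_nil, List.nil_append, List.cons_append] at heq
        obtain ⟨rfl, rfl⟩ : i = i' ∧ s = s' := by
          have := List.cons.injEq i s i' s' ▸ heq
          exact ⟨by injection heq, by injection heq⟩
        exact ⟨rfl, rfl, rfl⟩
      | node _ i' r' w' cs' hi' hne' hs' =>
        rw [idxSeq_node, idxSeq_node] at heq
        have hii : i = i' := by
          simp only [List.map_cons, List.map_nil, idxSeq_eps, List.flatten_cons,
            List.flatten_nil, List.nil_append, List.cons_append] at heq
          injection heq
        subst hii
        rw [hi] at hi'
        exact absurd (Option.some_injective _ hi').symm hne'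
    | node _ i r w cs hi hne hs =>
      cases hp' with
      | epsNode _ i' hi' =>
        rw [idxSeq_node, idxSeq_node] at heq
        have hii : i = i' := by
          simp only [List.map_cons, List.map_nil, idxSeq_eps, List.flatten_cons,
            List.flatten_nil, List.nil_append, List.cons_append] at heq
          injection heq
        subst hii
        rw [hi] at hi'
        exact absurd (Option.some_injective _ hi') hne
      | node _ i' r' w' cs' hi' hne' hs' =>
        rw [idxSeq_node, idxSeq_node] at heq
        simp only [List.cons_append] at heq
        have hii : i = i' := by injection heq
        subst hii
        rw [hi] at hi'
        have hrr : r = r' := Option.some_injective _ hi'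
        subst hrr
        have htl : (cs.map PTree.idxSeq).flatten ++ s
            = (cs'.map PTree.idxSeq).flatten ++ s' := by injection heq
        have hszcs : sizeOf cs < sizeOf (PTree.node A i cs) := by
          first
          | (simp; omega)
          | simp
          | omega
        obtain ⟨rfl, rfl, rfl⟩ := (ih _ hn).2 cs r w s cs' w' s' hszcs hs hs' htl
        exact ⟨rfl, rfl, rfl⟩
  · rintro cs r w s cs' w' s' hn hsq hsq' heq
    cases hsq with
    | nil =>
      obtain ⟨rfl, rfl⟩ := hsq'.nil_inv
      simp only [List.map_nil, List.flatten_nil, List.nil_append] at heq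
      exact ⟨rfl, rfl, heq⟩
    | consTm a r0 w0 cs0 hs0 =>
      cases hsq' with
      | consTm _ _ w0' cs0' hs0' =>
        simp only [List.map_cons, idxSeq_leaf, List.flatten_cons, List.nil_append] at heq
        have hsz : sizeOf cs0 < sizeOf (PTree.leaf (N := N) a :: cs0) := by
          first
          | (simp; omega)
          | simp
          | omega
        obtain ⟨rfl, rfl, rfl⟩ := (ih _ hn).2 cs0 r0 w0 s cs0' w0' s' hsz hs0 hs0' heq
        exact ⟨rfl, rfl, rfl⟩
    | consNt A1 t1 wA r0 w0 cs0 hpt hs0 =>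
      cases hsq' with
      | consNt _ t1' wA' _ w0' cs0' hpt' hs0' =>
        simp only [List.map_cons, List.flatten_cons] at heq
        rw [List.append_assoc, List.append_assoc] at heq
        have hszt : sizeOf t1 < sizeOf (t1 :: cs0) := by
          first
          | (simp; omega)
          | simp
          | omega
        have hszc : sizeOf cs0 < sizeOf (t1 :: cs0) := by
          first
          | (simp; omega)
          | simp
          | omega
        obtain ⟨rfl, rfl, htl⟩ := (ih _ hn).1 t1 A1 wA _ t1' wA' _ hszt hpt hpt' heq
        obtain ⟨rfl, rfl, rfl⟩ := (ih _ hn).2 cs0 r0 w0 s cs0' w0' s' hszc hs0 hs0' htl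
        exact ⟨rfl, rfl, rfl⟩

/-- injectivity of `idxSeq` on parse trees -/
lemma idxSeq_injOn (G : OCFG N T) {A : N} {w w' : List T} {t t' : PTree N T}
    (h : ParseFrom G A w t) (h' : ParseFrom G A w' t') (heq : t.idxSeq = t'.idxSeq) :
    t = t' := by
  have := ((det_aux G (sizeOf t + 1)).1 t A w [] t' w' [] (Nat.lt_succ_self _) h h'
    (by rw [List.append_nil, List.append_nil, heq]))
  exact this.1

end Ocfg
namespace Ocfg

attribute [local instance] Classical.propDecidable

variable {N T : Type}

/-- bound on the number of rules used, for ε-free unit-free fragments -/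
lemma good_bound (G : OCFG N T) (Good : N → Prop)
    (Hg : ∀ A r, Good A → r ∈ G.prods A →
      r ≠ [] ∧ (∀ B, r ≠ [Sym.nt B]) ∧ (∀ B, Sym.nt B ∈ r → Good B)) :
    ∀ n : ℕ,
    (∀ (t : PTree N T) A w, sizeOf t < n → Good A → ParseFrom G A w t →
      w ≠ [] ∧ t.numRules + 1 ≤ 2 * w.length) ∧
    (∀ (cs : List (PTree N T)) r w, sizeOf cs < n → (∀ B, Sym.nt B ∈ r → Good B) →
      ParseSeq G r w cs → (cs.map PTree.numRules).sum + r.length ≤ 2 * w.length) := by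
  intro n
  induction n using Nat.strong_induction_on with
  | _ n ih =>
  constructor
  · rintro t A w hn hA hp
    cases hp with
    | epsNode _ i hi =>
      exact absurd rfl (Hg A [] hA (rule_mem_of_getElem? hi)).1
    | node _ i r w cs hi hne hs =>
      obtain ⟨-, hnu, hGood⟩ := Hg A r hA (rule_mem_of_getElem? hi)
      have hszcs : sizeOf cs < sizeOf (PTree.node A i cs) := by
        first
        | (simp; omega)
        | simp
        | omega
      have hseq := (ih _ hn).2 cs r w hszcs hGood hs
      rw [numRules_node]
      match r, hne with
      | [s], _ =>
        cases s with
        | tm a =>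
          cases hs with
          | consTm _ _ w0 cs0 hs0 =>
            obtain ⟨rfl, rfl⟩ := hs0.nil_inv
            simp
        | nt B => exact absurd rfl (hnu B)
      | s₁ :: s₂ :: rest, _ =>
        have hlen : (s₁ :: s₂ :: rest).length ≥ 2 := by
          simp only [List.length_cons]
          omega
        constructor
        · intro hwnil
          subst hwnil
          simp only [List.length_nil, Nat.mul_zero, Nat.le_zero, List.length_cons] at hseq
          omega
        · simp only [List.length_cons] at hseq ⊢
          omega
  · rintro cs r w hn hGood hs
    cases hs with
    | nil => simp
    | consTm a r0 w0 cs0 hs0 =>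
      have hsz : sizeOf cs0 < sizeOf (PTree.leaf (N := N) a :: cs0) := by
        first
        | (simp; omega)
        | simp
        | omega
      have h0 := (ih _ hn).2 cs0 r0 w0 hsz (fun B hB => hGood B (List.mem_cons_of_mem _ hB)) hs0
      simp only [List.map_cons, numRules_leaf, List.sum_cons, List.length_cons]
      omega
    | consNt A1 t1 wA r0 w0 cs0 hpt hs0 =>
      have hszt : sizeOf t1 < sizeOf (t1 :: cs0) := by
        first
        | (simp; omega)
        | simp
        | omega
      have hszc : sizeOf cs0 < sizeOf (t1 :: cs0) := by
        first
        | (simp; omega)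
        | simp
        | omega
      have hA1 : Good A1 := hGood A1 List.mem_cons_self
      have h1 := ((ih _ hn).1 t1 A1 wA hszt hA1 hpt).2
      have h0 := (ih _ hn).2 cs0 r0 w0 hszc (fun B hB => hGood B (List.mem_cons_of_mem _ hB)) hs0
      simp only [List.map_cons, List.sum_cons, List.length_cons, List.length_append]
      omega

lemma good_bound_tree (G : OCFG N T) (Good : N → Prop)
    (Hg : ∀ A r, Good A → r ∈ G.prods A →
      r ≠ [] ∧ (∀ B, r ≠ [Sym.nt B]) ∧ (∀ B, Sym.nt B ∈ r → Good B))
    {t : PTree N T} {A w} (hA : Good A) (hp : ParseFrom G A w t) :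
    w ≠ [] ∧ t.numRules + 1 ≤ 2 * w.length :=
  (good_bound G Good Hg (sizeOf t + 1)).1 t A w (Nat.lt_succ_self _) hA hp

lemma good_bound_seq (G : OCFG N T) (Good : N → Prop)
    (Hg : ∀ A r, Good A → r ∈ G.prods A →
      r ≠ [] ∧ (∀ B, r ≠ [Sym.nt B]) ∧ (∀ B, Sym.nt B ∈ r → Good B))
    {cs : List (PTree N T)} {r w} (hGood : ∀ B, Sym.nt B ∈ r → Good B)
    (hs : ParseSeq G r w cs) : (cs.map PTree.numRules).sum + r.length ≤ 2 * w.length :=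
  (good_bound G Good Hg (sizeOf cs + 1)).2 cs r w (Nat.lt_succ_self _) hGood hs

/-- `elim G` rules are good -/
lemma elim_goodness [Fintype N] (G : OCFG N T) :
    ∀ A r, r ∈ (elim G).prods A → r ≠ [] ∧ (∀ B, r ≠ [Sym.nt B]) := by
  intro A r hr
  have hg := elim_good G hr
  exact ⟨goodRhs_ne_nil hg, goodRhs_ne_unit hg⟩

/-- the grammar we finally use -/
noncomputable def finalG [Fintype N] (G : OCFG N T) (hE : Prop) : OCFG (Option N) T :=
  addStart (elim G) hE

lemma finalG_good [Fintype N] (G : OCFG N T) (hE : Prop) :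
    ∀ (o : Option N) r, o.isSome = true → r ∈ (finalG G hE).prods o →
      r ≠ [] ∧ (∀ B, r ≠ [Sym.nt B]) ∧ (∀ B, Sym.nt B ∈ r → B.isSome = true) := by
  rintro o r ho hr
  match o, ho with
  | some A, _ =>
    rw [finalG, addStart_prods_some] at hr
    obtain ⟨r0, hr0, rfl⟩ := List.mem_map.1 hr
    obtain ⟨h1, h2⟩ := elim_goodness G A r0 hr0
    refine ⟨by simpa using h1, ?_, ?_⟩
    · intro B hB
      match r0, hB with
      | [Sym.nt B'], hB =>
        simp only [List.map_cons, List.map_nil, liftSym] at hB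
        exact h2 B' rfl
    · intro B hB
      obtain ⟨s, hs, hmap⟩ := List.mem_map.1 hB
      cases s with
      | nt C => rw [liftSym] at hmap; injection hmap with h; rw [← h]; rfl
      | tm a => rw [liftSym] at hmap; exact absurd hmap (by simp)

/-- bound for parses from the fresh start -/
lemma finalG_bound [Fintype N] (G : OCFG N T) (hE : Prop) {w : List T} {t : PTree (Option N) T}
    (h : ParseFrom (finalG G hE) none w t) : t.numRules ≤ 2 * w.length + 1 := by
  cases h with
  | epsNode _ i hi =>
    rw [numRules_node]
    simp
  | node _ i r w cs hi hne hs =>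
    have hmem := rule_mem_of_getElem? hi
    rw [finalG, addStart_prods_none] at hmem
    have hGoodr : ∀ B, Sym.nt B ∈ r → B.isSome = true := by
      rcases List.mem_append.1 hmem with hmem | hmem
      · obtain ⟨r0, hr0, rfl⟩ := List.mem_map.1 hmem
        intro B hB
        obtain ⟨s, hs, hmap⟩ := List.mem_map.1 hB
        cases s with
        | nt C => rw [liftSym] at hmap; injection hmap with h; rw [← h]; rfl
        | tm a => rw [liftSym] at hmap; exact absurd hmap (by simp)
      · by_cases hEE : hE
        · rw [if_pos hEE] at hmem
          simp at hmem
          exact absurd hmem hne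
        · rw [if_neg hEE] at hmem; simp at hmem
    have := good_bound_seq (finalG G hE) (fun o => o.isSome = true)
      (fun A r hA hr => finalG_good G hE A r hA hr) hGoodr hs
    rw [numRules_node]
    have hrlen : 1 ≤ r.length := by
      cases r with
      | nil => exact absurd rfl hne
      | cons s r => simp
    omega

/-- ε-freeness of `elim` -/
lemma elim_no_eps [Fintype N] (G : OCFG N T) {A w} {t : PTree N T}
    (h : ParseFrom (elim G) A w t) : w ≠ [] := by
  exact (good_bound_tree (elim G) (fun _ => True)
    (fun A r _ hr => ⟨(elim_goodness G A r hr).1, (elim_goodness G A r hr).2,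
      fun _ _ => trivial⟩) trivial h).1

/-- global bound on rule indices -/
noncomputable def idxBound [Fintype N] (G : OCFG N T) : ℕ :=
  (Finset.univ.sup fun A => (G.prods A).length) + 1

lemma idx_lt_aux [Fintype N] (G : OCFG N T) : ∀ n : ℕ,
    (∀ (t : PTree N T) A w, sizeOf t < n → ParseFrom G A w t →
      ∀ j ∈ t.idxSeq, j < idxBound G) ∧
    (∀ (cs : List (PTree N T)) r w, sizeOf cs < n → ParseSeq G r w cs →
      ∀ j ∈ (cs.map PTree.idxSeq).flatten, j < idxBound G) := by
  intro n
  induction n using Nat.strong_induction_on with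
  | _ n ih =>
  have hroot : ∀ (A : N) (i : ℕ) (r : List (Sym N T)),
      (G.prods A)[i]? = some r → i < idxBound G := by
    intro A i r hi
    have hlt : i < (G.prods A).length := (List.getElem?_eq_some_iff.1 hi).1
    have hle : (G.prods A).length ≤ Finset.univ.sup fun A => (G.prods A).length :=
      Finset.le_sup (f := fun A => (G.prods A).length) (Finset.mem_univ A)
    rw [idxBound]
    omega
  constructor
  · rintro t A w hn hp
    cases hp with
    | epsNode _ i hi =>
      rw [idxSeq_node]
      intro j hj
      simp only [List.map_cons, List.map_nil, idxSeq_eps, List.flatten_cons, List.flatten_nil,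
        List.append_nil, List.mem_singleton] at hj
      rw [hj]
      exact hroot A i [] hi
    | node _ i r w cs hi hne hs =>
      rw [idxSeq_node]
      intro j hj
      rcases List.mem_cons.1 hj with rfl | hj
      · exact hroot A j r hi
      · have hszcs : sizeOf cs < sizeOf (PTree.node A i cs) := by
          first
          | (simp; omega)
          | simp
          | omega
        exact (ih _ hn).2 cs r w hszcs hs j hj
  · rintro cs r w hn hs
    cases hs with
    | nil => simp
    | consTm a r0 w0 cs0 hs0 =>
      intro j hj
      simp only [List.map_cons, idxSeq_leaf, List.flatten_cons, List.nil_append] at hj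
      have hsz : sizeOf cs0 < sizeOf (PTree.leaf (N := N) a :: cs0) := by
        first
        | (simp; omega)
        | simp
        | omega
      exact (ih _ hn).2 cs0 r0 w0 hsz hs0 j hj
    | consNt A1 t1 wA r0 w0 cs0 hpt hs0 =>
      intro j hj
      simp only [List.map_cons, List.flatten_cons, List.mem_append] at hj
      have hszt : sizeOf t1 < sizeOf (t1 :: cs0) := by
        first
        | (simp; omega)
        | simp
        | omega
      have hszc : sizeOf cs0 < sizeOf (t1 :: cs0) := by
        first
        | (simp; omega)
        | simp
        | omega
      rcases hj with hj | hj
      · exact (ih _ hn).1 t1 A1 wA hszt hpt j hj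
      · exact (ih _ hn).2 cs0 r0 w0 hszc hs0 j hj

lemma idxSeq_len (t : PTree N T) : t.idxSeq.length = t.numRules :=
  idxSeq_length (sizeOf t + 1) t (Nat.lt_succ_self _)

lemma idx_lt [Fintype N] (G : OCFG N T) {t A w} (h : ParseFrom G A w t) :
    ∀ j ∈ t.idxSeq, j < idxBound G :=
  (idx_lt_aux G (sizeOf t + 1)).1 t A w (Nat.lt_succ_self _) h

end Ocfg
namespace Ocfg

attribute [local instance] Classical.propDecidable

variable {N T : Type}

/-- any grammar with a bound on the number of rules in parse trees is well-ordered -/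
theorem wellOrdered_of_bound [Fintype N] (G : OCFG N T) (K : List T → ℕ)
    (hb : ∀ w t, ParseFrom G G.start w t → t.numRules ≤ K w) :
    WellOrderedG G := by
  intro w Φ hsub hne
  set M := idxBound G with hM
  have hS : ({l : List ℕ | l.length ≤ K w ∧ ∀ j ∈ l, j < M}).Finite := by
    have h1 : {l : List (Fin M) | l.length ≤ K w}.Finite := List.finite_length_le _ _
    have h2 := h1.image (fun l : List (Fin M) => l.map Fin.val)
    refine h2.subset ?_
    rintro l ⟨hlen, hlt⟩
    refine ⟨l.pmap (fun j h => (⟨j, h⟩ : Fin M)) (fun j hj => hlt j hj), ?_, ?_⟩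
    · simpa [Set.mem_setOf_eq, List.length_pmap] using hlen
    · show List.map Fin.val (List.pmap _ l _) = l
      rw [List.map_pmap]
      exact (List.pmap_eq_map (f := id) _).trans (List.map_id _)
  have himg : (PTree.idxSeq '' parseTrees G w) ⊆
      {l : List ℕ | l.length ≤ K w ∧ ∀ j ∈ l, j < M} := by
    rintro _ ⟨t, ht, rfl⟩
    exact ⟨by rw [idxSeq_len]; exact hb w t ht, idx_lt G ht⟩
  have hfin : (parseTrees G w).Finite := by
    refine Set.Finite.of_finite_image (hS.subset himg) ?_
    intro t ht t' ht' heq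
    exact idxSeq_injOn G ht ht' heq
  obtain ⟨t, htΦ, hmin⟩ := Set.exists_min_image Φ PTree.idxSeq (hfin.subset hsub) hne
  refine ⟨t, htΦ, fun t' ht' => ?_⟩
  rcases lt_or_eq_of_le (hmin t' ht') with hlt | heq2
  · exact Or.inr hlt
  · exact Or.inl (idxSeq_injOn G (hsub htΦ) (hsub ht') heq2)

lemma hasLeast_of_wellOrdered (G : OCFG N T) (h : WellOrderedG G) : HasLeastTrees G := by
  intro w hne
  obtain ⟨t, ht, hmin⟩ := h w (parseTrees G w) (fun _ h => h) hne
  exact ⟨t, ht, hmin⟩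

/-- the main construction -/
theorem exists_nice (L : Language T) (h : L.IsContextFree) :
    ∃ (N : Type) (_ : Fintype N) (G : OCFG N T),
      WellOrderedG G ∧ HasLeastTrees G ∧ langOf G = L := by
  obtain ⟨g, hg⟩ := h
  refine ⟨Option (NTb g), inferInstance, finalG (ocfgOf g) ([] ∈ L), ?_, ?_, ?_⟩
  case refine_1 =>
    exact wellOrdered_of_bound _ (fun w => 2 * w.length + 1)
      (fun w t ht => finalG_bound (ocfgOf g) ([] ∈ L) ht)
  case refine_2 =>
    exact hasLeast_of_wellOrdered _ (wellOrdered_of_bound _ (fun w => 2 * w.length + 1)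
      (fun w t ht => finalG_bound (ocfgOf g) ([] ∈ L) ht))
  case refine_3 =>
    have hGb : langOf (ocfgOf g) = L := by rw [ocfgOf_language]; exact hg
    ext w
    have hmem : w ∈ langOf (finalG (ocfgOf g) ([] ∈ L)) ↔
        ((∃ t, ParseFrom (elim (ocfgOf g)) (elim (ocfgOf g)).start w t) ∨
          ([] ∈ L ∧ w = [])) := addStart_lang (elim (ocfgOf g)) ([] ∈ L) w
    rw [hmem]
    have helimstart : (elim (ocfgOf g)).start = (ocfgOf g).start := rfl
    rcases eq_or_ne w [] with rfl | hw
    · constructor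
      · rintro (⟨t, ht⟩ | ⟨hL, -⟩)
        · exact absurd rfl (elim_no_eps (ocfgOf g) ht)
        · exact hL
      · intro hL
        exact Or.inr ⟨hL, rfl⟩
    · constructor
      · rintro (⟨t, ht⟩ | ⟨-, habs⟩)
        · rw [helimstart] at ht
          obtain ⟨t0, ht0⟩ := elim_sound (ocfgOf g) ht
          rw [← hGb]
          exact ⟨t0, ht0⟩
        · exact absurd habs hw
      · intro hL
        rw [← hGb] at hL
        obtain ⟨t0, ht0⟩ := hL
        obtain ⟨t, ht⟩ := elim_complete (ocfgOf g) ht0 hw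
        rw [← helimstart] at ht
        exact Or.inl ⟨t, ht⟩

end Ocfg

open Ocfg

/-- The languages of well-ordered oCFGs are exactly the
context-free languages, and likewise for oCFGs having least parse trees. -/
theorem stmt5 {T : Type} (L : Language T) :
    ((∃ (N : Type) (_ : Fintype N) (G : OCFG N T),
        WellOrderedG G ∧ langOf G = L) ↔ L.IsContextFree) ∧
    ((∃ (N : Type) (_ : Fintype N) (G : OCFG N T),
        HasLeastTrees G ∧ langOf G = L) ↔ L.IsContextFree) := by
  constructor
  · constructor
    · rintro ⟨N, fN, G, -, rfl⟩
      haveI := fN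
      exact ⟨mg G, (langOf_mg G).symm⟩
    · intro h
      obtain ⟨N, fN, G, hWO, -, hL⟩ := exists_nice L h
      exact ⟨N, fN, G, hWO, hL⟩
  · constructor
    · rintro ⟨N, fN, G, -, rfl⟩
      haveI := fN
      exact ⟨mg G, (langOf_mg G).symm⟩
    · intro h
      obtain ⟨N, fN, G, -, hHL, hL⟩ := exists_nice L h
      exact ⟨N, fN, G, hHL, hL⟩
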